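/- Let P(A,b,B) be an even polynomial in the variables a_1,...,a_n, b, b_1,...,b_k. Then the function S_{b,B}[P](A,N) := Σ_{b,b_1,...,b_k ≥ 1, b + Σb_i = N} P(A,b,B)·∏b_i + (1/2) Σ_{b_1,...,b_k ≥ 1, Σb_i = N} P(A,0,B)·∏b_i is an even polynomial in (a_1,...,a_n, N). -/

import Mathlib

/-- The sum `S_{b,B}[P](A,N)`: variables are indexed by `Fin n ⊕ (Unit ⊕ Fin k)`, with the
`Fin n` part the variables `a₁,...,aₙ`, the `Unit` part the variable `b`, and the `Fin k` part
the variables `b₁,...,b_k`. -/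
noncomputable def Ssum (n k : ℕ) (P : MvPolynomial (Fin n ⊕ (Unit ⊕ Fin k)) ℂ)
    (A : Fin n → ℂ) (N : ℕ) : ℂ :=
  (∑ t ∈ (Finset.Nat.antidiagonalTuple (k + 1) N).filter fun t => ∀ i, 1 ≤ t i,
      MvPolynomial.eval
        (Sum.elim A (Sum.elim (fun _ => ((t 0 : ℂ))) fun i => ((t i.succ : ℂ)))) P *
        ∏ i : Fin k, (t i.succ : ℂ)) +
    (1 / 2 : ℂ) *
      ∑ t ∈ (Finset.Nat.antidiagonalTuple k N).filter fun t => ∀ i, 1 ≤ t i,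
        MvPolynomial.eval (Sum.elim A (Sum.elim (fun _ => (0 : ℂ)) fun i => ((t i : ℂ)))) P *
          ∏ i : Fin k, (t i : ℂ)

namespace SsumAux

open Polynomial Finset

lemma natExt {p q : Polynomial ℂ} (h : ∀ n : ℕ, p.eval (n : ℂ) = q.eval (n : ℂ)) : p = q := by
  have hroot : ∀ n : ℕ, (p - q).IsRoot (n : ℂ) := fun n => by
    simp [Polynomial.IsRoot, h n]
  have hinf : Set.Infinite {x : ℂ | (p - q).IsRoot x} :=
    Set.infinite_of_injective_forall_mem Nat.cast_injective hroot
  have hz := Polynomial.eq_zero_of_infinite_isRoot _ hinf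
  exact sub_eq_zero.mp hz

lemma deltaConst {p : Polynomial ℂ} (h : ∀ x : ℂ, p.eval (x + 1) = p.eval x) (x : ℂ) :
    p.eval x = p.eval 0 := by
  have hn : ∀ n : ℕ, p.eval (n : ℂ) = p.eval 0 := by
    intro n
    induction n with
    | zero => simp
    | succ m ih =>
      have : ((m + 1 : ℕ) : ℂ) = (m : ℂ) + 1 := by push_cast; ring
      rw [this, h]; exact ih
  have hpq : p = Polynomial.C (p.eval 0) := natExt (by simpa using hn)
  conv_lhs => rw [hpq]
  simp

noncomputable def Spoly (d : ℕ) : Polynomial ℂ :=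
  ∑ i ∈ range (d + 1),
    Polynomial.C (((_root_.bernoulli i) * ((d + 1).choose i) / (d + 1) : ℚ) : ℂ) *
      (Polynomial.X + 1) ^ (d + 1 - i)

lemma Spoly_eval (d N : ℕ) :
    (Spoly d).eval (N : ℂ) = ∑ m ∈ range (N + 1), (m : ℂ) ^ d := by
  have h2 := congrArg (fun q : ℚ => (q : ℂ)) (sum_range_pow (N + 1) d)
  push_cast at h2
  rw [Spoly, eval_finset_sum, h2]
  refine Finset.sum_congr rfl fun i _ => ?_
  push_cast
  simp only [eval_mul, eval_C, eval_pow, eval_add, eval_X, eval_one]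
  push_cast
  ring

noncomputable def Tpoly (d : ℕ) : Polynomial ℂ :=
  Spoly d - Polynomial.C (1 / 2 : ℂ) * Polynomial.X ^ d - Polynomial.C ((0 : ℂ) ^ d / 2)

lemma Tpoly_eval (d N : ℕ) :
    (Tpoly d).eval (N : ℂ)
      = (∑ m ∈ range (N + 1), (m : ℂ) ^ d) - ((0 : ℂ) ^ d + (N : ℂ) ^ d) / 2 := by
  simp only [Tpoly, eval_sub, eval_mul, eval_C, eval_pow, eval_X, Spoly_eval]
  ring

lemma Tpoly_delta (d : ℕ) (x : ℂ) :
    (Tpoly d).eval (x + 1) = (Tpoly d).eval x + ((x + 1) ^ d + x ^ d) / 2 := by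
  have key : (Tpoly d).comp (Polynomial.X + Polynomial.C 1)
      = Tpoly d + Polynomial.C (1 / 2 : ℂ) *
          ((Polynomial.X + Polynomial.C 1) ^ d + Polynomial.X ^ d) := by
    apply natExt
    intro n
    simp only [eval_comp, eval_add, eval_X, eval_C, eval_mul, eval_pow, eval_one]
    have h1 : ((n : ℂ) + 1) = ((n + 1 : ℕ) : ℂ) := by push_cast; ring
    rw [h1, Tpoly_eval, Tpoly_eval, Finset.sum_range_succ (n := n + 1)]
    push_cast
    ring
  have h := congrArg (Polynomial.eval x) key
  simp only [eval_comp, eval_add, eval_X, eval_C, eval_mul, eval_pow, eval_one] at h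
  rw [h]; ring

lemma Tpoly_zero (d : ℕ) : (Tpoly d).eval 0 = 0 := by
  have h := Tpoly_eval d 0
  rw [Nat.cast_zero] at h
  rw [h, Finset.sum_range_one]
  ring

lemma Tpoly_reflect (d : ℕ) (x : ℂ) :
    (Tpoly d).eval (-x) = (-1 : ℂ) ^ (d + 1) * (Tpoly d).eval x := by
  set g : Polynomial ℂ :=
    Polynomial.C ((-1 : ℂ) ^ (d + 1)) * (Tpoly d).comp (-Polynomial.X) - Tpoly d with hg
  have hgeval : ∀ y : ℂ,
      g.eval y = (-1 : ℂ) ^ (d + 1) * (Tpoly d).eval (-y) - (Tpoly d).eval y := by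
    intro y; simp [hg, eval_comp]
  have hstep : ∀ y : ℂ, g.eval (y + 1) = g.eval y := by
    intro y
    rw [hgeval, hgeval]
    have h1 := Tpoly_delta d y
    have h2 := Tpoly_delta d (-y - 1)
    rw [show (-y - 1 + 1 : ℂ) = -y from by ring] at h2
    rw [show ((-y : ℂ)) ^ d = (-1 : ℂ) ^ d * y ^ d from by rw [neg_pow],
        show ((-y - 1 : ℂ)) ^ d = (-1 : ℂ) ^ d * (y + 1) ^ d from by
          rw [show (-y - 1 : ℂ) = -(y + 1) from by ring, neg_pow]] at h2
    have ha : (-1 : ℂ) ^ d * (-1 : ℂ) ^ d = 1 := by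
      rw [← pow_add, ← two_mul, pow_mul]; norm_num
    rw [show (-(y + 1) : ℂ) = -y - 1 from by ring, pow_succ]
    linear_combination ((-1 : ℂ) ^ d) * h2 - h1 + ((y ^ d + (y + 1) ^ d) / 2) * ha
  have hzero : g.eval 0 = 0 := by
    rw [hgeval, neg_zero, Tpoly_zero]; ring
  have hx := deltaConst hstep x
  rw [hzero] at hx
  rw [hgeval] at hx
  have hx' : (-1 : ℂ) ^ (d + 1) * (Tpoly d).eval (-x) = (Tpoly d).eval x := by
    linear_combination hx
  have he : (-1 : ℂ) ^ (d + 1) * (-1 : ℂ) ^ (d + 1) = 1 := by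
    rw [← pow_add, ← two_mul, pow_mul]; norm_num
  rw [← hx', ← mul_assoc, he, one_mul]

lemma comp_neg_coeff (p : Polynomial ℂ) (l : ℕ) :
    (p.comp (-Polynomial.X)).coeff l = (-1 : ℂ) ^ l * p.coeff l := by
  induction p using Polynomial.induction_on' with
  | add p q hp hq => simp only [Polynomial.add_comp, Polynomial.coeff_add, hp, hq]; ring
  | monomial n a =>
    have h : ((Polynomial.monomial n a).comp (-Polynomial.X) : Polynomial ℂ)
        = Polynomial.C ((-1) ^ n * a) * Polynomial.X ^ n := by
      rw [Polynomial.monomial_comp, neg_pow, map_mul]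
      rw [show ((-1 : ℂ[X]) ^ n) = Polynomial.C ((-1 : ℂ) ^ n) from by
        rw [map_pow, map_neg, map_one]]
      ring
    rw [h, Polynomial.coeff_C_mul, Polynomial.coeff_X_pow, Polynomial.coeff_monomial]
    by_cases hnl : n = l
    · subst hnl; simp
    · rw [if_neg hnl, if_neg (fun h : l = n => hnl h.symm)]; ring

lemma coeff_parity {v : Polynomial ℂ} {e : ℂ} (hv : ∀ x : ℂ, v.eval (-x) = e * v.eval x)
    {l : ℕ} (hl : v.coeff l ≠ 0) : (-1 : ℂ) ^ l = e := by
  have hcomp : v.comp (-Polynomial.X) = Polynomial.C e * v := by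
    apply Polynomial.funext
    intro r
    simp only [Polynomial.eval_comp, Polynomial.eval_neg, Polynomial.eval_X, Polynomial.eval_mul,
      Polynomial.eval_C]
    exact hv r
  have h2 := congrArg (fun q : Polynomial ℂ => q.coeff l) hcomp
  simp only [comp_neg_coeff, Polynomial.coeff_C_mul] at h2
  exact mul_right_cancel₀ hl h2

noncomputable def wjl (j l : ℕ) : Polynomial ℂ :=
  ∑ i ∈ range (l + 1),
    Polynomial.C ((l.choose i : ℂ) * (-1) ^ (l - i)) * Polynomial.X ^ i * Tpoly (j + (l - i))

lemma wjl_reflect (j l : ℕ) (x : ℂ) :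
    (wjl j l).eval (-x) = (-1 : ℂ) ^ (j + l + 1) * (wjl j l).eval x := by
  simp only [wjl, eval_finset_sum, eval_mul, eval_C, eval_pow, eval_X, Finset.mul_sum]
  refine Finset.sum_congr rfl fun i hi => ?_
  have hi' : i ≤ l := by
    have := Finset.mem_range.mp hi; omega
  rw [Tpoly_reflect, neg_pow]
  have hsign : (-1 : ℂ) ^ i * (-1 : ℂ) ^ (j + (l - i) + 1) = (-1 : ℂ) ^ (j + l + 1) := by
    rw [← pow_add]; congr 1; omega
  linear_combination ((l.choose i : ℂ) * (-1 : ℂ) ^ (l - i) * x ^ i *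
    (Tpoly (j + (l - i))).eval x) * hsign

lemma wjl_eval (j l N : ℕ) :
    (wjl j l).eval (N : ℂ)
      = (∑ m ∈ range (N + 1), (m : ℂ) ^ j * ((N : ℂ) - (m : ℂ)) ^ l)
        - ((0 : ℂ) ^ j * (N : ℂ) ^ l + (N : ℂ) ^ j * (0 : ℂ) ^ l) / 2 := by
  have hA : (∑ m ∈ range (N + 1), (m : ℂ) ^ j * ((N : ℂ) - (m : ℂ)) ^ l)
      = ∑ i ∈ range (l + 1), ((l.choose i : ℂ) * (-1) ^ (l - i)) * (N : ℂ) ^ i *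
          ∑ m ∈ range (N + 1), (m : ℂ) ^ (j + (l - i)) := by
    have hexp : ∀ m : ℕ, ((N : ℂ) - (m : ℂ)) ^ l
        = ∑ i ∈ range (l + 1), (N : ℂ) ^ i * (-(m : ℂ)) ^ (l - i) * (l.choose i : ℂ) := by
      intro m
      rw [sub_eq_add_neg]
      exact add_pow (N : ℂ) (-(m : ℂ)) l
    calc (∑ m ∈ range (N + 1), (m : ℂ) ^ j * ((N : ℂ) - (m : ℂ)) ^ l)
        = ∑ m ∈ range (N + 1), ∑ i ∈ range (l + 1),
            ((l.choose i : ℂ) * (-1) ^ (l - i)) * (N : ℂ) ^ i * (m : ℂ) ^ (j + (l - i)) := by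
          refine Finset.sum_congr rfl fun m _ => ?_
          rw [hexp m, Finset.mul_sum]
          refine Finset.sum_congr rfl fun i _ => ?_
          rw [neg_pow, pow_add]
          ring
      _ = ∑ i ∈ range (l + 1), ∑ m ∈ range (N + 1),
            ((l.choose i : ℂ) * (-1) ^ (l - i)) * (N : ℂ) ^ i * (m : ℂ) ^ (j + (l - i)) :=
          Finset.sum_comm
      _ = _ := by
          refine Finset.sum_congr rfl fun i _ => ?_
          rw [Finset.mul_sum]
  have hB1 : (∑ i ∈ range (l + 1), ((l.choose i : ℂ) * (-1) ^ (l - i)) * (N : ℂ) ^ i *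
        (0 : ℂ) ^ (j + (l - i))) = (0 : ℂ) ^ j * (N : ℂ) ^ l := by
    rw [Finset.sum_eq_single l]
    · simp [mul_comm]
    · intro i hi hne
      have hil : i < l := by have := Finset.mem_range.mp hi; omega
      rw [zero_pow (by omega : j + (l - i) ≠ 0)]
      ring
    · intro h; exact absurd (Finset.self_mem_range_succ l) h
  have hB2 : (∑ i ∈ range (l + 1), ((l.choose i : ℂ) * (-1) ^ (l - i)) * (N : ℂ) ^ i *
        (N : ℂ) ^ (j + (l - i))) = (N : ℂ) ^ j * (0 : ℂ) ^ l := by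
    have h01 : ((1 : ℂ) + (-1)) ^ l
        = ∑ i ∈ range (l + 1), (1 : ℂ) ^ i * (-1 : ℂ) ^ (l - i) * (l.choose i : ℂ) :=
      add_pow 1 (-1) l
    have h02 : ((0 : ℂ)) ^ l = ∑ i ∈ range (l + 1), (l.choose i : ℂ) * (-1 : ℂ) ^ (l - i) := by
      rw [show (0 : ℂ) = (1 : ℂ) + (-1) from by ring, h01]
      exact Finset.sum_congr rfl fun i _ => by ring
    calc (∑ i ∈ range (l + 1), ((l.choose i : ℂ) * (-1) ^ (l - i)) * (N : ℂ) ^ i *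
          (N : ℂ) ^ (j + (l - i)))
        = ∑ i ∈ range (l + 1), ((l.choose i : ℂ) * (-1) ^ (l - i)) * ((N : ℂ) ^ (j + l)) := by
          refine Finset.sum_congr rfl fun i hi => ?_
          have hil : i ≤ l := by have := Finset.mem_range.mp hi; omega
          rw [mul_assoc, ← pow_add]
          congr 2
          omega
      _ = (0 : ℂ) ^ l * (N : ℂ) ^ (j + l) := by rw [← Finset.sum_mul, ← h02]
      _ = (N : ℂ) ^ j * (0 : ℂ) ^ l := by
          rcases Nat.eq_zero_or_pos l with rfl | hl
          · simp
          · rw [zero_pow (by omega : l ≠ 0)]; ring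
  calc (wjl j l).eval (N : ℂ)
      = ∑ i ∈ range (l + 1),
          (((l.choose i : ℂ) * (-1) ^ (l - i)) * (N : ℂ) ^ i *
              ∑ m ∈ range (N + 1), (m : ℂ) ^ (j + (l - i))
            - (((l.choose i : ℂ) * (-1) ^ (l - i)) * (N : ℂ) ^ i * (0 : ℂ) ^ (j + (l - i))) / 2
            - (((l.choose i : ℂ) * (-1) ^ (l - i)) * (N : ℂ) ^ i * (N : ℂ) ^ (j + (l - i))) / 2) := by
        simp only [wjl, eval_finset_sum, eval_mul, eval_C, eval_pow, eval_X, Tpoly_eval]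
        refine Finset.sum_congr rfl fun i _ => ?_
        ring
    _ = (∑ i ∈ range (l + 1), ((l.choose i : ℂ) * (-1) ^ (l - i)) * (N : ℂ) ^ i *
            ∑ m ∈ range (N + 1), (m : ℂ) ^ (j + (l - i)))
        - (∑ i ∈ range (l + 1), (((l.choose i : ℂ) * (-1) ^ (l - i)) * (N : ℂ) ^ i *
            (0 : ℂ) ^ (j + (l - i)))) / 2
        - (∑ i ∈ range (l + 1), (((l.choose i : ℂ) * (-1) ^ (l - i)) * (N : ℂ) ^ i *
            (N : ℂ) ^ (j + (l - i)))) / 2 := by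
        rw [Finset.sum_sub_distrib, Finset.sum_sub_distrib, Finset.sum_div, Finset.sum_div]
    _ = _ := by rw [← hA, hB1, hB2]; ring

lemma conv_poly (j : ℕ) (v : Polynomial ℂ) (e : ℂ)
    (hv : ∀ x : ℂ, v.eval (-x) = e * v.eval x) :
    ∃ w : Polynomial ℂ,
      (∀ x : ℂ, w.eval (-x) = -((-1 : ℂ) ^ j * e) * w.eval x) ∧
      (∀ N : ℕ, w.eval (N : ℂ)
        = (∑ m ∈ range (N + 1), (m : ℂ) ^ j * v.eval ((N : ℂ) - (m : ℂ)))
          - ((0 : ℂ) ^ j * v.eval (N : ℂ) + (N : ℂ) ^ j * v.eval 0) / 2) := by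
  have hval : ∀ x : ℂ, v.eval x = ∑ l ∈ v.support, v.coeff l * x ^ l := by
    intro x
    rw [Polynomial.eval_eq_sum, Polynomial.sum_def]
  refine ⟨∑ l ∈ v.support, Polynomial.C (v.coeff l) * wjl j l, ?_, ?_⟩
  · intro x
    simp only [eval_finset_sum, eval_mul, eval_C, Finset.mul_sum]
    refine Finset.sum_congr rfl fun l hl => ?_
    rw [wjl_reflect]
    have he : (-1 : ℂ) ^ l = e := coeff_parity hv (Polynomial.mem_support_iff.mp hl)
    rw [← he]
    have hsgn : (-1 : ℂ) ^ (j + l + 1) = -((-1 : ℂ) ^ j * (-1 : ℂ) ^ l) := by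
      rw [pow_add, pow_add, pow_one]; ring
    rw [hsgn]; ring
  · intro N
    simp only [eval_finset_sum, eval_mul, eval_C]
    have P1h : (∑ l ∈ v.support, ∑ m ∈ range (N + 1),
          v.coeff l * ((m : ℂ) ^ j * ((N : ℂ) - (m : ℂ)) ^ l))
        = ∑ m ∈ range (N + 1), (m : ℂ) ^ j * v.eval ((N : ℂ) - (m : ℂ)) := by
      rw [Finset.sum_comm]
      refine Finset.sum_congr rfl fun m _ => ?_
      rw [hval ((N : ℂ) - (m : ℂ)), Finset.mul_sum]
      refine Finset.sum_congr rfl fun l _ => ?_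
      ring
    have P2h : (∑ l ∈ v.support, v.coeff l * (N : ℂ) ^ l) = v.eval (N : ℂ) := (hval _).symm
    have P3h : (∑ l ∈ v.support, v.coeff l * (0 : ℂ) ^ l) = v.eval 0 := (hval _).symm
    calc (∑ l ∈ v.support, v.coeff l * (wjl j l).eval (N : ℂ))
        = ∑ l ∈ v.support,
            ((∑ m ∈ range (N + 1), v.coeff l * ((m : ℂ) ^ j * ((N : ℂ) - (m : ℂ)) ^ l))
              - (v.coeff l * ((0 : ℂ) ^ j * (N : ℂ) ^ l)
                  + v.coeff l * ((N : ℂ) ^ j * (0 : ℂ) ^ l)) / 2) := by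
          refine Finset.sum_congr rfl fun l _ => ?_
          rw [wjl_eval, mul_sub, Finset.mul_sum]
          ring
      _ = (∑ l ∈ v.support, ∑ m ∈ range (N + 1),
            v.coeff l * ((m : ℂ) ^ j * ((N : ℂ) - (m : ℂ)) ^ l))
          - ((∑ l ∈ v.support, v.coeff l * ((0 : ℂ) ^ j * (N : ℂ) ^ l))
              + ∑ l ∈ v.support, v.coeff l * ((N : ℂ) ^ j * (0 : ℂ) ^ l)) / 2 := by
          rw [Finset.sum_sub_distrib, ← Finset.sum_div, Finset.sum_add_distrib]
      _ = _ := by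
          rw [P1h]
          have e1 : (∑ l ∈ v.support, v.coeff l * ((0 : ℂ) ^ j * (N : ℂ) ^ l))
              = (0 : ℂ) ^ j * ∑ l ∈ v.support, v.coeff l * (N : ℂ) ^ l := by
            rw [Finset.mul_sum]
            exact Finset.sum_congr rfl fun l _ => by ring
          have e2 : (∑ l ∈ v.support, v.coeff l * ((N : ℂ) ^ j * (0 : ℂ) ^ l))
              = (N : ℂ) ^ j * ∑ l ∈ v.support, v.coeff l * (0 : ℂ) ^ l := by
            rw [Finset.mul_sum]
            exact Finset.sum_congr rfl fun l _ => by ring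
          rw [e1, e2, P2h, P3h]

lemma cons_split {k : ℕ} (N : ℕ) (f : (Fin (k + 1) → ℕ) → ℂ) :
    (∑ t ∈ Finset.Nat.antidiagonalTuple (k + 1) N, f t)
      = ∑ m ∈ range (N + 1), ∑ t ∈ Finset.Nat.antidiagonalTuple k (N - m), f (Fin.cons m t) := by
  rw [Finset.sum_sigma']
  refine Finset.sum_nbij' (fun t => (⟨t 0, Fin.tail t⟩ : Σ _ : ℕ, (Fin k → ℕ)))
    (fun x => Fin.cons x.1 x.2) ?_ ?_ ?_ ?_ ?_
  · intro t ht
    rw [Finset.Nat.mem_antidiagonalTuple] at ht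
    rw [Fin.sum_univ_succ] at ht
    simp only [Finset.mem_sigma, Finset.mem_range, Finset.Nat.mem_antidiagonalTuple]
    have h3 : ∑ i : Fin k, Fin.tail t i = ∑ i : Fin k, t i.succ := rfl
    rw [h3]
    omega
  · intro x hx
    obtain ⟨m, u⟩ := x
    simp only [Finset.mem_sigma, Finset.mem_range, Finset.Nat.mem_antidiagonalTuple] at hx
    simp only [Finset.Nat.mem_antidiagonalTuple, Fin.sum_univ_succ, Fin.cons_zero, Fin.cons_succ]
    omega
  · intro t _
    dsimp only
    exact Fin.cons_self_tail t
  · intro x _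
    obtain ⟨m, u⟩ := x
    dsimp only
    rw [Fin.cons_zero, Fin.tail_cons]
  · intro t _
    dsimp only
    rw [Fin.cons_self_tail]

noncomputable def Bsum {j : ℕ} (δ : Fin j → ℕ) (N : ℕ) : ℂ :=
  ∑ t ∈ Finset.Nat.antidiagonalTuple j N, ∏ i, (t i : ℂ) ^ δ i

lemma Bsum_rec {k : ℕ} (δ : Fin (k + 1) → ℕ) (N : ℕ) :
    Bsum δ N = ∑ m ∈ range (N + 1), (m : ℂ) ^ δ 0 * Bsum (fun i => δ i.succ) (N - m) := by
  rw [Bsum, cons_split]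
  refine Finset.sum_congr rfl fun m _ => ?_
  rw [Bsum, Finset.mul_sum]
  refine Finset.sum_congr rfl fun t _ => ?_
  rw [Fin.prod_univ_succ]
  simp only [Fin.cons_zero, Fin.cons_succ]

lemma Bsum_poly : ∀ (j : ℕ), 1 ≤ j → ∀ (δ : Fin j → ℕ), (∀ i, 1 ≤ δ i) →
    ∃ p : Polynomial ℂ,
      (∀ x : ℂ, p.eval (-x) = (-1 : ℂ) ^ (j + 1 + ∑ i, δ i) * p.eval x) ∧
      p.eval 0 = 0 ∧ ∀ N : ℕ, p.eval (N : ℂ) = Bsum δ N := by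
  intro j
  induction j with
  | zero => intro h; omega
  | succ k ih =>
    intro _ δ hδ
    rcases Nat.eq_zero_or_pos k with rfl | hk
    · refine ⟨Polynomial.X ^ δ 0, ?_, ?_, ?_⟩
      · intro x
        simp only [eval_pow, eval_X]
        rw [neg_pow]
        have h1 : (-1 : ℂ) ^ (0 + 1 + 1 + ∑ i, δ i) = (-1 : ℂ) ^ (δ 0) := by
          rw [Fin.sum_univ_one, show 0 + 1 + 1 + δ 0 = δ 0 + 2 from by omega, pow_add]
          norm_num
        rw [h1]
      · simp [zero_pow (by have := hδ 0; omega : δ 0 ≠ 0)]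
      · intro N
        rw [Bsum]
        rw [Finset.Nat.antidiagonalTuple_one]
        rw [Finset.sum_singleton, Fin.prod_univ_one]
        simp
    · obtain ⟨p, hrefl, h0, hval⟩ := ih hk (fun i => δ i.succ) (fun i => hδ _)
      obtain ⟨w, wrefl, wval⟩ := conv_poly (δ 0) p _ hrefl
      have hexp : (-1 : ℂ) ^ (k + 1 + 1 + ∑ i, δ i)
          = -((-1 : ℂ) ^ (δ 0) * (-1 : ℂ) ^ (k + 1 + ∑ i : Fin k, δ i.succ)) := by
        have hs : ∑ i, δ i = δ 0 + ∑ i : Fin k, δ i.succ := Fin.sum_univ_succ δ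
        rw [show k + 1 + 1 + ∑ i, δ i = (δ 0 + (k + 1 + ∑ i : Fin k, δ i.succ)) + 1 from by
          rw [hs]; omega]
        rw [pow_succ, pow_add]
        ring
      have hval' : ∀ N : ℕ, w.eval (N : ℂ) = Bsum δ N := by
        intro N
        rw [wval N, Bsum_rec δ N]
        rw [zero_pow (by have := hδ 0; omega : δ 0 ≠ 0), h0]
        have hsum : (∑ m ∈ range (N + 1), (m : ℂ) ^ δ 0 * p.eval ((N : ℂ) - (m : ℂ)))
            = ∑ m ∈ range (N + 1), (m : ℂ) ^ δ 0 * Bsum (fun i => δ i.succ) (N - m) := by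
          refine Finset.sum_congr rfl fun m hm => ?_
          have hmN : m ≤ N := by have := Finset.mem_range.mp hm; omega
          rw [show ((N : ℂ) - (m : ℂ)) = ((N - m : ℕ) : ℂ) from by
            rw [Nat.cast_sub hmN], hval (N - m)]
        rw [hsum]
        ring
      refine ⟨w, ?_, ?_, hval'⟩
      · intro x
        rw [wrefl x, hexp]
      · have := hval' 0
        rw [Nat.cast_zero] at this
        rw [this, Bsum]
        rw [Finset.Nat.antidiagonalTuple_zero_right]
        rw [Finset.sum_singleton]
        refine Finset.prod_eq_zero (Finset.mem_univ 0) ?_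
        rw [show ((0 : Fin (k + 1) → ℕ) 0 : ℂ) = 0 from by norm_num]
        exact zero_pow (by have := hδ 0; omega : δ 0 ≠ 0)

lemma eval_polyX {σ : Type*} (y : σ → ℂ) (v : σ) (w : Polynomial ℂ) :
    MvPolynomial.eval y (Polynomial.aeval (MvPolynomial.X v) w) = w.eval (y v) := by
  have h := Polynomial.aeval_algHom_apply (MvPolynomial.aeval y) (MvPolynomial.X v) w
  simp only [MvPolynomial.aeval_X] at h
  calc MvPolynomial.eval y (Polynomial.aeval (MvPolynomial.X v) w)
      = MvPolynomial.aeval y (Polynomial.aeval (MvPolynomial.X v) w) := rfl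
    _ = Polynomial.aeval (y v) w := h.symm
    _ = w.eval (y v) := by rw [← Polynomial.coe_aeval_eq_eval]

lemma support_even {σ : Type*} [Fintype σ] [DecidableEq σ] (P : MvPolynomial σ ℂ)
    (hP : ∀ x : σ → ℂ, MvPolynomial.eval (fun v => -x v) P = MvPolynomial.eval x P)
    {s : σ →₀ ℕ} (hs : s ∈ P.support) : (-1 : ℂ) ^ (∑ v, s v) = 1 := by
  set P' : MvPolynomial σ ℂ := ∑ t ∈ P.support,
    MvPolynomial.monomial t ((-1 : ℂ) ^ (∑ v, t v) * MvPolynomial.coeff t P) with hP'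
  have hev : ∀ x : σ → ℂ, MvPolynomial.eval x P' = MvPolynomial.eval x P := by
    intro x
    rw [hP', map_sum, ← hP x, MvPolynomial.eval_eq' (fun v => -x v) P]
    refine Finset.sum_congr rfl fun t _ => ?_
    rw [MvPolynomial.eval_monomial, Finsupp.prod_fintype _ _ (fun i => pow_zero _)]
    have hprod : (∏ v, (-x v) ^ t v) = ((-1 : ℂ) ^ (∑ v, t v)) * ∏ v, x v ^ t v := by
      rw [← Finset.prod_pow_eq_pow_sum, ← Finset.prod_mul_distrib]
      exact Finset.prod_congr rfl fun v _ => by rw [neg_pow]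
    rw [hprod]
    ring
  have hPP : P' = P := MvPolynomial.funext hev
  have hc := congrArg (MvPolynomial.coeff s) hPP
  rw [hP', MvPolynomial.coeff_sum] at hc
  rw [Finset.sum_eq_single_of_mem s hs (fun t _ htne => by
    rw [MvPolynomial.coeff_monomial, if_neg htne])] at hc
  rw [MvPolynomial.coeff_monomial, if_pos rfl] at hc
  have hc' : ((-1 : ℂ) ^ (∑ v, s v)) * MvPolynomial.coeff s P = 1 * MvPolynomial.coeff s P := by
    rw [one_mul]; exact hc
  exact mul_right_cancel₀ (MvPolynomial.mem_support_iff.mp hs) hc'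

end SsumAux

open MvPolynomial

namespace SsumAux

lemma Ssum_add (n k : ℕ) (P1 P2 : MvPolynomial (Fin n ⊕ (Unit ⊕ Fin k)) ℂ)
    (A : Fin n → ℂ) (N : ℕ) :
    Ssum n k (P1 + P2) A N = Ssum n k P1 A N + Ssum n k P2 A N := by
  unfold Ssum
  simp only [map_add, add_mul]
  rw [Finset.sum_add_distrib, Finset.sum_add_distrib]
  ring

lemma Ssum_zero (n k : ℕ) (A : Fin n → ℂ) (N : ℕ) : Ssum n k 0 A N = 0 := by
  unfold Ssum
  simp

lemma Ssum_sum {ι : Type*} (n k : ℕ) (S : Finset ι)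
    (F : ι → MvPolynomial (Fin n ⊕ (Unit ⊕ Fin k)) ℂ) (A : Fin n → ℂ) (N : ℕ) :
    Ssum n k (∑ s ∈ S, F s) A N = ∑ s ∈ S, Ssum n k (F s) A N := by
  classical
  induction S using Finset.induction_on with
  | empty => simp [Ssum_zero]
  | insert _ _ hnm ih =>
    rw [Finset.sum_insert hnm, Finset.sum_insert hnm, Ssum_add, ih]

lemma eval_monomial_elim {n k : ℕ} (s : (Fin n ⊕ (Unit ⊕ Fin k)) →₀ ℕ) (c : ℂ)
    (x : (Fin n ⊕ (Unit ⊕ Fin k)) → ℂ) :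
    MvPolynomial.eval x (MvPolynomial.monomial s c)
      = c * (∏ i, x (Sum.inl i) ^ s (Sum.inl i))
          * x (Sum.inr (Sum.inl ())) ^ s (Sum.inr (Sum.inl ()))
          * ∏ i, x (Sum.inr (Sum.inr i)) ^ s (Sum.inr (Sum.inr i)) := by
  rw [MvPolynomial.eval_monomial, Finsupp.prod_fintype _ _ (fun i => pow_zero _)]
  rw [Fintype.prod_sum_type]
  have h2 : (∏ v : Unit ⊕ Fin k, x (Sum.inr v) ^ s (Sum.inr v))
      = x (Sum.inr (Sum.inl ())) ^ s (Sum.inr (Sum.inl ()))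
        * ∏ i, x (Sum.inr (Sum.inr i)) ^ s (Sum.inr (Sum.inr i)) := by
    rw [Fintype.prod_sum_type]
    congr 1
    exact Fintype.prod_unique _
  rw [h2]
  ring

end SsumAux

namespace SsumAux

lemma Ssum_monomial (n k : ℕ) (hk : 1 ≤ k) (s : (Fin n ⊕ (Unit ⊕ Fin k)) →₀ ℕ) (c : ℂ)
    (hs : (-1 : ℂ) ^ (∑ v, s v) = 1) :
    ∃ Q : MvPolynomial (Fin n ⊕ Unit) ℂ,
      (∀ y : Fin n ⊕ Unit → ℂ, MvPolynomial.eval (fun v => -y v) Q = MvPolynomial.eval y Q) ∧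
      ∀ (A : Fin n → ℂ) (N : ℕ),
        MvPolynomial.eval (Sum.elim A fun _ => (N : ℂ)) Q
          = Ssum n k (MvPolynomial.monomial s c) A N := by
  classical
  set β : ℕ := s (Sum.inr (Sum.inl ())) with hβ
  set δ : Fin k → ℕ := fun i => s (Sum.inr (Sum.inr i)) + 1 with hδ
  have hδpos : ∀ i, 1 ≤ δ i := fun i => Nat.le_add_left 1 _
  have hδne : ∀ i, δ i ≠ 0 := fun i => by have := hδpos i; omega
  obtain ⟨p, prefl, p0, pval⟩ := Bsum_poly k hk δ hδpos
  obtain ⟨w, wrefl, wval⟩ := conv_poly β p _ prefl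
  have hδsum : (∑ i, δ i) = (∑ i, s (Sum.inr (Sum.inr i))) + k := by
    rw [hδ, Finset.sum_add_distrib, Finset.sum_const, Finset.card_univ, Fintype.card_fin,
      smul_eq_mul, mul_one]
  have hsplit : (∑ v, s v)
      = (∑ i, s (Sum.inl i)) + (β + ∑ i, s (Sum.inr (Sum.inr i))) := by
    have hu : (∑ u : Unit, s (Sum.inr (Sum.inl u))) = β := Fintype.sum_unique _
    rw [Fintype.sum_sum_type, Fintype.sum_sum_type, hu]
  have hew : ∀ x : ℂ, w.eval (-x)
      = (-1 : ℂ) ^ (β + ∑ i, s (Sum.inr (Sum.inr i))) * w.eval x := by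
    intro x
    rw [wrefl x]
    congr 1
    rw [hδsum, ← pow_add]
    rw [show β + (k + 1 + ((∑ i, s (Sum.inr (Sum.inr i))) + k))
        = (β + ∑ i, s (Sum.inr (Sum.inr i))) + (2 * k + 1) from by omega]
    have h2k : (-1 : ℂ) ^ (2 * k + 1) = -1 := by
      rw [pow_succ, pow_mul]; norm_num
    rw [pow_add, h2k, pow_add]
    ring
  set Q : MvPolynomial (Fin n ⊕ Unit) ℂ :=
    MvPolynomial.C c * (∏ i : Fin n, MvPolynomial.X (Sum.inl i) ^ s (Sum.inl i))
      * Polynomial.aeval (MvPolynomial.X (Sum.inr ())) w with hQ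
  have hQeval : ∀ y : Fin n ⊕ Unit → ℂ,
      MvPolynomial.eval y Q
        = c * (∏ i, y (Sum.inl i) ^ s (Sum.inl i)) * w.eval (y (Sum.inr ())) := by
    intro y
    rw [hQ]
    simp only [map_mul, map_prod, map_pow, MvPolynomial.eval_C, MvPolynomial.eval_X, eval_polyX]
  refine ⟨Q, ?_, ?_⟩
  · intro y
    rw [hQeval, hQeval]
    have hprod : (∏ i, (-(y (Sum.inl i))) ^ s (Sum.inl i))
        = (-1 : ℂ) ^ (∑ i, s (Sum.inl i)) * ∏ i, (y (Sum.inl i)) ^ s (Sum.inl i) := by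
      rw [← Finset.prod_pow_eq_pow_sum, ← Finset.prod_mul_distrib]
      exact Finset.prod_congr rfl fun i _ => by rw [neg_pow]
    rw [hprod, hew]
    have hone : (-1 : ℂ) ^ (∑ i, s (Sum.inl i))
        * (-1 : ℂ) ^ (β + ∑ i, s (Sum.inr (Sum.inr i))) = 1 := by
      rw [← pow_add, ← hsplit]
      exact hs
    linear_combination (c * (∏ i, (y (Sum.inl i)) ^ s (Sum.inl i)) * w.eval (y (Sum.inr ()))) * hone
  · intro A N
    rw [hQeval]
    simp only [Sum.elim_inl, Sum.elim_inr]
    -- compute the right-hand side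
    have hS1 : (∑ t ∈ (Finset.Nat.antidiagonalTuple (k + 1) N).filter fun t => ∀ i, 1 ≤ t i,
          MvPolynomial.eval
            (Sum.elim A (Sum.elim (fun _ => ((t 0 : ℂ))) fun i => ((t i.succ : ℂ))))
            (MvPolynomial.monomial s c) * ∏ i : Fin k, (t i.succ : ℂ))
        = c * (∏ i, A i ^ s (Sum.inl i)) *
            ∑ t ∈ (Finset.Nat.antidiagonalTuple (k + 1) N).filter fun t => ∀ i, 1 ≤ t i,
              ((t 0 : ℂ) ^ β * ∏ i : Fin k, (t i.succ : ℂ) ^ δ i) := by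
      rw [Finset.mul_sum]
      refine Finset.sum_congr rfl fun t _ => ?_
      rw [eval_monomial_elim]
      simp only [Sum.elim_inl, Sum.elim_inr]
      have hmerge : (∏ i : Fin k, (t i.succ : ℂ) ^ δ i)
          = (∏ i : Fin k, (t i.succ : ℂ) ^ s (Sum.inr (Sum.inr i))) * ∏ i : Fin k, (t i.succ : ℂ) := by
        rw [← Finset.prod_mul_distrib]
        refine Finset.prod_congr rfl fun i _ => ?_
        rw [hδ, pow_succ]
      rw [hmerge]
      ring
    have hS2 : (∑ t ∈ (Finset.Nat.antidiagonalTuple k N).filter fun t => ∀ i, 1 ≤ t i,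
          MvPolynomial.eval (Sum.elim A (Sum.elim (fun _ => (0 : ℂ)) fun i => ((t i : ℂ))))
            (MvPolynomial.monomial s c) * ∏ i : Fin k, (t i : ℂ))
        = c * (∏ i, A i ^ s (Sum.inl i)) * ((0 : ℂ) ^ β * Bsum δ N) := by
      have step1 : (∑ t ∈ (Finset.Nat.antidiagonalTuple k N).filter fun t => ∀ i, 1 ≤ t i,
            MvPolynomial.eval (Sum.elim A (Sum.elim (fun _ => (0 : ℂ)) fun i => ((t i : ℂ))))
              (MvPolynomial.monomial s c) * ∏ i : Fin k, (t i : ℂ))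
          = c * (∏ i, A i ^ s (Sum.inl i)) *
              ∑ t ∈ (Finset.Nat.antidiagonalTuple k N).filter fun t => ∀ i, 1 ≤ t i,
                ((0 : ℂ) ^ β * ∏ i : Fin k, (t i : ℂ) ^ δ i) := by
        rw [Finset.mul_sum]
        refine Finset.sum_congr rfl fun t _ => ?_
        rw [eval_monomial_elim]
        simp only [Sum.elim_inl, Sum.elim_inr]
        have hmerge : (∏ i : Fin k, (t i : ℂ) ^ δ i)
            = (∏ i : Fin k, (t i : ℂ) ^ s (Sum.inr (Sum.inr i))) * ∏ i : Fin k, (t i : ℂ) := by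
          rw [← Finset.prod_mul_distrib]
          refine Finset.prod_congr rfl fun i _ => ?_
          rw [hδ, pow_succ]
        rw [hmerge]
        ring
      rw [step1]
      congr 1
      rw [← Finset.mul_sum]
      congr 1
      rw [Bsum]
      refine Finset.sum_filter_of_ne fun t _ hne => ?_
      intro i
      have h1 : (t i : ℂ) ^ δ i ≠ 0 :=
        Finset.prod_ne_zero_iff.mp hne i (Finset.mem_univ i)
      have h2 : (t i : ℂ) ≠ 0 := fun h0 => h1 (by rw [h0]; exact zero_pow (hδne i))
      have h3 : t i ≠ 0 := fun h0 => h2 (by rw [h0]; norm_num)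
      omega
    have hS3a : (∑ t ∈ (Finset.Nat.antidiagonalTuple (k + 1) N).filter fun t => ∀ i, 1 ≤ t i,
          ((t 0 : ℂ) ^ β * ∏ i : Fin k, (t i.succ : ℂ) ^ δ i))
        = ∑ t ∈ (Finset.Nat.antidiagonalTuple (k + 1) N).filter fun t => 1 ≤ t 0,
            ((t 0 : ℂ) ^ β * ∏ i : Fin k, (t i.succ : ℂ) ^ δ i) := by
      rw [Finset.sum_filter, Finset.sum_filter]
      refine Finset.sum_congr rfl fun t _ => ?_
      by_cases hall : ∀ i, 1 ≤ t i
      · rw [if_pos hall, if_pos (hall 0)]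
      · rw [if_neg hall]
        by_cases h0 : 1 ≤ t 0
        · rw [if_pos h0]
          push_neg at hall
          obtain ⟨i, hi⟩ := hall
          have hine : i ≠ 0 := fun h => by rw [h] at hi; omega
          obtain ⟨j, rfl⟩ := Fin.eq_succ_of_ne_zero hine
          have hzero : (t j.succ : ℂ) ^ δ j = 0 := by
            rw [show t j.succ = 0 from by omega, Nat.cast_zero]
            exact zero_pow (hδne j)
          rw [Finset.prod_eq_zero (Finset.mem_univ j) hzero, mul_zero]
        · rw [if_neg h0]
    have hS3b : (∑ t ∈ (Finset.Nat.antidiagonalTuple (k + 1) N).filter fun t => 1 ≤ t 0,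
          ((t 0 : ℂ) ^ β * ∏ i : Fin k, (t i.succ : ℂ) ^ δ i))
        = (∑ t ∈ Finset.Nat.antidiagonalTuple (k + 1) N,
            ((t 0 : ℂ) ^ β * ∏ i : Fin k, (t i.succ : ℂ) ^ δ i))
          - ∑ t ∈ (Finset.Nat.antidiagonalTuple (k + 1) N).filter fun t => ¬ 1 ≤ t 0,
              ((t 0 : ℂ) ^ β * ∏ i : Fin k, (t i.succ : ℂ) ^ δ i) := by
      have hadd := Finset.sum_filter_add_sum_filter_not (Finset.Nat.antidiagonalTuple (k + 1) N)
        (fun t => 1 ≤ t 0) (fun t => ((t 0 : ℂ) ^ β * ∏ i : Fin k, (t i.succ : ℂ) ^ δ i))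
      linear_combination hadd
    have hS3c : (∑ t ∈ Finset.Nat.antidiagonalTuple (k + 1) N,
          ((t 0 : ℂ) ^ β * ∏ i : Fin k, (t i.succ : ℂ) ^ δ i))
        = ∑ m ∈ Finset.range (N + 1), (m : ℂ) ^ β * Bsum δ (N - m) := by
      rw [cons_split N (fun t => ((t 0 : ℂ) ^ β * ∏ i : Fin k, (t i.succ : ℂ) ^ δ i))]
      refine Finset.sum_congr rfl fun m _ => ?_
      rw [Bsum, Finset.mul_sum]
      refine Finset.sum_congr rfl fun t _ => ?_
      simp only [Fin.cons_zero, Fin.cons_succ]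
    have hS3d : (∑ t ∈ (Finset.Nat.antidiagonalTuple (k + 1) N).filter fun t => ¬ 1 ≤ t 0,
          ((t 0 : ℂ) ^ β * ∏ i : Fin k, (t i.succ : ℂ) ^ δ i))
        = (0 : ℂ) ^ β * Bsum δ N := by
      rw [Finset.sum_filter]
      rw [cons_split N (fun t => if ¬ 1 ≤ t 0 then
        ((t 0 : ℂ) ^ β * ∏ i : Fin k, (t i.succ : ℂ) ^ δ i) else 0)]
      rw [Finset.sum_eq_single_of_mem 0 (Finset.mem_range.mpr (by omega))
        (fun m _ hm0 => Finset.sum_eq_zero fun t _ => by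
          rw [if_neg (by simp only [Fin.cons_zero]; omega)])]
      have hcongr : ∀ t ∈ Finset.Nat.antidiagonalTuple k (N - 0),
          (if ¬ 1 ≤ (Fin.cons 0 t : Fin (k + 1) → ℕ) 0 then
              (((Fin.cons 0 t : Fin (k + 1) → ℕ) 0 : ℂ) ^ β *
                ∏ i : Fin k, ((Fin.cons 0 t : Fin (k + 1) → ℕ) i.succ : ℂ) ^ δ i) else 0)
            = (0 : ℂ) ^ β * ∏ i : Fin k, (t i : ℂ) ^ δ i := by
        intro t _
        rw [if_pos (by simp only [Fin.cons_zero]; omega)]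
        simp only [Fin.cons_zero, Fin.cons_succ, Nat.cast_zero]
      rw [Finset.sum_congr rfl hcongr, ← Finset.mul_sum, Nat.sub_zero, Bsum]
    have hwN : w.eval (N : ℂ)
        = (∑ m ∈ Finset.range (N + 1), (m : ℂ) ^ β * Bsum δ (N - m))
          - ((0 : ℂ) ^ β * Bsum δ N) / 2 := by
      rw [wval N]
      have hcast : ∀ m ∈ Finset.range (N + 1),
          (m : ℂ) ^ β * p.eval ((N : ℂ) - (m : ℂ)) = (m : ℂ) ^ β * Bsum δ (N - m) := by
        intro m hm
        have hmN : m ≤ N := by have := Finset.mem_range.mp hm; omega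
        rw [show ((N : ℂ) - (m : ℂ)) = ((N - m : ℕ) : ℂ) from by rw [Nat.cast_sub hmN],
          pval (N - m)]
      rw [Finset.sum_congr rfl hcast, pval N, p0]
      ring
    show _ = Ssum n k (MvPolynomial.monomial s c) A N
    rw [Ssum, hS1, hS2, hS3a, hS3b, hS3c, hS3d, hwN]
    ring

end SsumAux

/-- If `P(A,b,B)` is an even polynomial in `a₁,...,aₙ,b,b₁,...,b_k`, then
`S_{b,B}[P](A,N)` agrees with an even polynomial in `(a₁,...,aₙ,N)`. -/
theorem Ssum_even (n k : ℕ) (hk : 1 ≤ k) (P : MvPolynomial (Fin n ⊕ (Unit ⊕ Fin k)) ℂ)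
    (hP : ∀ x : Fin n ⊕ (Unit ⊕ Fin k) → ℂ,
      MvPolynomial.eval (fun v => -x v) P = MvPolynomial.eval x P) :
    ∃ Q : MvPolynomial (Fin n ⊕ Unit) ℂ,
      (∀ y : Fin n ⊕ Unit → ℂ, MvPolynomial.eval (fun v => -y v) Q = MvPolynomial.eval y Q) ∧
      ∀ (A : Fin n → ℂ) (N : ℕ),
        MvPolynomial.eval (Sum.elim A fun _ => (N : ℂ)) Q = Ssum n k P A N := by
  classical
  have key : ∀ s ∈ P.support, ∃ Q : MvPolynomial (Fin n ⊕ Unit) ℂ,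
      (∀ y : Fin n ⊕ Unit → ℂ, MvPolynomial.eval (fun v => -y v) Q = MvPolynomial.eval y Q) ∧
      ∀ (A : Fin n → ℂ) (N : ℕ),
        MvPolynomial.eval (Sum.elim A fun _ => (N : ℂ)) Q
          = Ssum n k (MvPolynomial.monomial s (MvPolynomial.coeff s P)) A N :=
    fun s hs => SsumAux.Ssum_monomial n k hk s (MvPolynomial.coeff s P)
      (SsumAux.support_even P hP hs)
  choose Qf hQ1 hQ2 using key
  refine ⟨∑ t ∈ P.support.attach, Qf t.1 t.2, ?_, ?_⟩
  · intro y
    rw [map_sum, map_sum]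
    exact Finset.sum_congr rfl fun t _ => hQ1 t.1 t.2 y
  · intro A N
    rw [map_sum]
    rw [Finset.sum_congr rfl fun (t : {x // x ∈ P.support}) _ => hQ2 t.1 t.2 A N]
    rw [Finset.sum_attach P.support
      (fun s => Ssum n k (MvPolynomial.monomial s (MvPolynomial.coeff s P)) A N)]
    rw [← SsumAux.Ssum_sum, MvPolynomial.support_sum_monomial_coeff P]
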